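/- Call a pair {i,j} ⊆ {1,...,n} (i ≠ j) a driver set for the cycle graph C_n if the pair (A, B_{i,j}) is controllable, where A is the adjacency matrix of C_n and B_{i,j} = [e_i, e_j]. Then {i,j} is a driver set for C_n if and only if gcd(2d, n) ∈ {1, 2}, where d = min(|j - i|, n - |j - i|) is the cycle distance between i and j. -/

import Mathlib

open Matrix
open Fin.NatCast Fin.CommRing

/-- The adjacency matrix of the cycle graph `C_n` (over `ℝ`); vertex `i ∈ {1,…,n}`
is represented by `⟨i-1⟩ : Fin n`, and `i,j` are adjacent iff `i - j ≡ ±1 (mod n)`. -/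
def cycAdj (n : ℕ) : Matrix (Fin n) (Fin n) ℝ :=
  Matrix.of fun i j => if (i.1 + 1) % n = j.1 ∨ (j.1 + 1) % n = i.1 then 1 else 0

/-- The matrix `B = [e_i, e_j]`. -/
def pairMatrix (n : ℕ) (i j : Fin n) : Matrix (Fin n) (Fin 2) ℝ :=
  Matrix.of fun r c => if r = (if c = 0 then i else j) then 1 else 0


lemma key2 {n : ℕ} (hn : 3 ≤ n) (a b : ℕ) (ha : a < n) (hb : b < n) :
    ((a + 1) % n = b ↔ a = (n - 1 + b) % n) := by
  rcases Nat.lt_or_ge (a+1) n with h | h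
  · rw [Nat.mod_eq_of_lt h]
    constructor
    · rintro rfl
      have e : n - 1 + (a+1) = n + a := by omega
      rw [e, Nat.add_mod_left, Nat.mod_eq_of_lt ha]
    · intro hl
      rcases Nat.eq_zero_or_pos b with rfl | hbpos
      · rw [Nat.add_zero, Nat.mod_eq_of_lt (by omega)] at hl; omega
      · have e : n - 1 + b = n + (b-1) := by omega
        rw [e, Nat.add_mod_left, Nat.mod_eq_of_lt (by omega)] at hl
        omega
  · have e : a + 1 = n := by omega
    rw [e, Nat.mod_self]
    constructor
    · rintro rfl
      rw [Nat.add_zero, Nat.mod_eq_of_lt (by omega)]; omega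
    · intro hl
      rcases Nat.eq_zero_or_pos b with rfl | hbpos
      · rfl
      · have e2 : n - 1 + b = n + (b-1) := by omega
        rw [e2, Nat.add_mod_left, Nat.mod_eq_of_lt (by omega)] at hl
        omega

lemma cyc_mulVec {n : ℕ} [NeZero n] (hn : 3 ≤ n) (v : Fin n → ℂ) (m : Fin n) :
    ((cycAdj n).map Complex.ofReal).mulVec v m = v (m + 1) + v (m - 1) := by
  have h1 : (1 : Fin n).val = 1 := by
    rw [Fin.val_one']; exact Nat.mod_eq_of_lt (by omega)
  have hm := m.isLt
  have va : ∀ a : Fin n, (a + 1).val = (a.val + 1) % n := by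
    intro a; rw [Fin.val_add, h1]
  have vs : ∀ a : Fin n, (a - 1).val = (n - 1 + a.val) % n := by
    intro a; rw [Fin.sub_def, h1]
  have hcond : ∀ l : Fin n, ((m.1 + 1) % n = l.1 ∨ (l.1 + 1) % n = m.1) ↔ (l = m + 1 ∨ l = m - 1) := by
    intro l
    have hl := l.isLt
    rw [Fin.ext_iff, Fin.ext_iff, va, vs, key2 hn l.1 m.1 hl hm]
    constructor
    · rintro (h | h); · left; omega
      right; exact h
    · rintro (h | h); · left; omega
      right; exact h
  have hne : (m + 1 : Fin n) ≠ m - 1 := by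
    intro hcontra
    rw [Fin.ext_iff, va, vs] at hcontra
    revert hcontra
    rcases Nat.lt_or_ge (m.1+1) n with h | h
    · rw [Nat.mod_eq_of_lt h]
      rcases Nat.eq_zero_or_pos m.1 with hm0 | hm1
      · rw [hm0, Nat.add_zero, Nat.mod_eq_of_lt (by omega)]; omega
      · have e : n - 1 + m.1 = n + (m.1 - 1) := by omega
        rw [e, Nat.add_mod_left, Nat.mod_eq_of_lt (by omega)]; omega
    · have e : m.1 + 1 = n := by omega
      have e2 : n - 1 + m.1 = n + (n - 2) := by omega
      rw [e, Nat.mod_self, e2, Nat.add_mod_left, Nat.mod_eq_of_lt (by omega)]; omega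
  have entry : ∀ l : Fin n, ((cycAdj n).map Complex.ofReal) m l
      = (if l = m + 1 then (1:ℂ) else 0) + (if l = m - 1 then 1 else 0) := by
    intro l
    simp only [cycAdj, Matrix.map_apply, Matrix.of_apply]
    rw [apply_ite (Complex.ofReal), if_congr (hcond l) rfl rfl]
    by_cases h1' : l = m + 1 <;> by_cases h2' : l = m - 1 <;>
      simp_all
  unfold Matrix.mulVec dotProduct
  simp only [entry, add_mul, ite_mul, one_mul, zero_mul]
  rw [Finset.sum_add_distrib, Finset.sum_ite_eq' , Finset.sum_ite_eq']
  simp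


/-- Chebyshev-like sequence. -/
def cheb (μ : ℂ) : ℕ → ℂ
  | 0 => 0
  | 1 => 1
  | (k+2) => μ * cheb μ (k+1) - cheb μ k

lemma cheb_closed {μ z w : ℂ} (hzw : z * w = 1) (hμ : μ = z + w) (k : ℕ) :
    (z - w) * cheb μ k = z ^ k - w ^ k := by
  induction k using Nat.twoStepInduction with
  | zero => simp [cheb]
  | one => simp [cheb]
  | more k ih1 ih2 =>
    show (z - w) * (μ * cheb μ (k+1) - cheb μ k) = _
    have h : (z - w) * (μ * cheb μ (k+1) - cheb μ k)
        = μ * ((z - w) * cheb μ (k+1)) - (z - w) * cheb μ k := by ring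
    rw [h, ih2, ih1, hμ]
    linear_combination (z ^ k - w ^ k) * hzw

lemma cheb_degenerate {μ z : ℂ} (hz : z * z = 1) (hμ : μ = z + z) (k : ℕ) :
    cheb μ k = (k : ℂ) * z ^ (k+1) := by
  induction k using Nat.twoStepInduction with
  | zero => simp [cheb]
  | one =>
    show (1 : ℂ) = _
    push_cast
    rw [one_mul, pow_two]
    exact hz.symm
  | more k ih1 ih2 =>
    show μ * cheb μ (k+1) - cheb μ k = _
    rw [ih1, ih2, hμ]
    push_cast
    linear_combination ((k : ℂ) * z ^ (k+1)) * hz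


lemma rank_full_iff {n : ℕ} (M : Matrix (Fin n) (Fin n ⊕ Fin 2) ℂ) :
    M.rank = n ↔ ∀ v : Fin n → ℂ, Matrix.mulVec Mᵀ v = 0 → v = 0 := by
  rw [← Matrix.rank_transpose]
  have hrn := LinearMap.finrank_range_add_finrank_ker (Matrix.mulVecLin Mᵀ)
  rw [Module.finrank_pi ℂ, Fintype.card_fin] at hrn
  unfold Matrix.rank
  constructor
  · intro h v hv
    have hker : LinearMap.ker (Matrix.mulVecLin Mᵀ) = ⊥ := by
      rw [← Submodule.finrank_eq_zero (R := ℂ)]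
      omega
    exact (LinearMap.ker_eq_bot'.mp hker) v (by rwa [Matrix.mulVecLin_apply])
  · intro h
    have hker : LinearMap.ker (Matrix.mulVecLin Mᵀ) = ⊥ :=
      LinearMap.ker_eq_bot'.mpr (fun v hv => h v (by rwa [Matrix.mulVecLin_apply] at hv))
    rw [hker] at hrn
    simpa using hrn

section helpers
variable {n : ℕ} [NeZero n]

lemma fin_val_one (hn : 3 ≤ n) : (1 : Fin n).val = 1 := by
  rw [Fin.val_one']; exact Nat.mod_eq_of_lt (by omega)

lemma fin_val_add_one (hn : 3 ≤ n) (a : Fin n) : (a + 1).val = (a.val + 1) % n := by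
  rw [Fin.val_add, fin_val_one hn]

lemma pow_val_mod {z : ℂ} (hz : z ^ n = 1) (x : ℕ) : z ^ (x % n) = z ^ x := by
  conv_rhs => rw [← Nat.div_add_mod x n]
  rw [pow_add, pow_mul, hz, one_pow, one_mul]

/-- the value of a `v` satisfying the recurrence, with `v i = 0`. -/
lemma v_formula (hn : 3 ≤ n) {μ : ℂ} {v : Fin n → ℂ} (i : Fin n)
    (hv : ∀ m, v (m + 1) + v (m - 1) = μ * v m) (hvi : v i = 0) (k : ℕ) :
    v (i + (k : Fin n)) = v (i + 1) * cheb μ k := by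
  induction k using Nat.twoStepInduction with
  | zero => simpa [cheb] using hvi
  | one => simp [cheb]
  | more k ih1 ih2 =>
    have hcast : ((k + 2 : ℕ) : Fin n) = (k : Fin n) + 2 := by push_cast; ring
    have hm := hv (i + (k : Fin n) + 1)
    have e1 : i + (k : Fin n) + 1 + 1 = i + ((k + 2 : ℕ) : Fin n) := by rw [hcast]; ring
    have e2 : i + (k : Fin n) + 1 - 1 = i + (k : Fin n) := by ring
    have e3 : i + (k : Fin n) + 1 = i + ((k + 1 : ℕ) : Fin n) := by push_cast; ring
    rw [e1, e2, e3] at hm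
    have h4 : v (i + ((k + 2 : ℕ) : Fin n))
        = μ * v (i + ((k + 1 : ℕ) : Fin n)) - v (i + (k : Fin n)) := by
      linear_combination hm
    rw [h4, ih1, ih2]
    show _ = v (i + 1) * (μ * cheb μ (k + 1) - cheb μ k)
    ring

lemma eigen_vanish (hn : 3 ≤ n) {μ : ℂ} {v : Fin n → ℂ} (i : Fin n)
    (hv : ∀ m, v (m + 1) + v (m - 1) = μ * v m) (hvi : v i = 0) (a : Fin n) :
    v a = v (i + 1) * cheb μ ((a - i).val) := by
  have := v_formula hn i hv hvi ((a - i).val)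
  rwa [Fin.cast_val_eq_self, add_sub_cancel] at this

end helpers

lemma cheb_gcd {μ : ℂ} {n d : ℕ} (hn : 3 ≤ n) (hd1 : 0 < d)
    (h0 : cheb μ n = 0) (h1 : cheb μ (n + 1) = 1) (h2 : cheb μ d = 0) :
    ¬(Nat.gcd (2 * d) n = 1 ∨ Nat.gcd (2 * d) n = 2) := by
  intro hg
  obtain ⟨s, hs⟩ := IsAlgClosed.exists_pow_nat_eq (μ ^ 2 - 4) (two_pos)
  set z : ℂ := (μ + s) / 2 with hzdef
  set w : ℂ := (μ - s) / 2 with hwdef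
  have hzw : z * w = 1 := by
    rw [hzdef, hwdef]
    field_simp
    linear_combination -hs
  have hμ : μ = z + w := by rw [hzdef, hwdef]; ring
  have hz0 : z ≠ 0 := by
    intro h; rw [h, zero_mul] at hzw; exact zero_ne_one hzw
  have hw0 : w ≠ 0 := by
    intro h; rw [h, mul_zero] at hzw; exact zero_ne_one hzw
  by_cases hzweq : z = w
  · -- degenerate case : μ = 2z, z² = 1, cheb μ n = n z^{n+1} ≠ 0
    have hzz : z * z = 1 := by rw [hzweq] at hzw ⊢; exact hzw
    have := cheb_degenerate (μ := μ) hzz (by rw [hμ, hzweq]) n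
    rw [h0] at this
    have hnne : (n : ℂ) ≠ 0 := Nat.cast_ne_zero.mpr (by omega)
    exact (mul_ne_zero hnne (pow_ne_zero _ hz0)) this.symm
  · have closed := cheb_closed hzw hμ
    have hsub : z - w ≠ 0 := sub_ne_zero.mpr hzweq
    have hzn : z ^ n = w ^ n := by
      have := closed n
      rw [h0, mul_zero] at this
      exact (sub_eq_zero.mp this.symm)
    have hzn1 : z ^ n = 1 := by
      have hc := closed (n + 1)
      rw [h1, mul_one] at hc
      have e : z ^ (n + 1) - w ^ (n + 1) = z ^ n * (z - w) := by
        rw [pow_succ, pow_succ, hzn]; ring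
      rw [e] at hc
      have := mul_right_cancel₀ hsub (by rw [← hc]; ring : z ^ n * (z - w) = 1 * (z - w))
      exact this
    have hz2d : z ^ (2 * d) = 1 := by
      have hzd : z ^ d = w ^ d := by
        have := closed d
        rw [h2, mul_zero] at this
        exact (sub_eq_zero.mp this.symm)
      calc z ^ (2 * d) = z ^ d * z ^ d := by rw [two_mul, pow_add]
        _ = z ^ d * w ^ d := by rw [hzd]
        _ = (z * w) ^ d := (mul_pow z w d).symm
        _ = 1 := by rw [hzw, one_pow]
    have hdvd : orderOf z ∣ 2 := by
      have d1 : orderOf z ∣ Nat.gcd (2 * d) n :=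
        Nat.dvd_gcd (orderOf_dvd_of_pow_eq_one hz2d) (orderOf_dvd_of_pow_eq_one hzn1)
      rcases hg with h | h
      · rw [h] at d1; exact dvd_trans d1 (by norm_num)
      · rwa [h] at d1
    have hz2 : z ^ 2 = 1 := orderOf_dvd_iff_pow_eq_one.mp hdvd
    apply hzweq
    have : z * z = z * w := by
      rw [hzw, ← hz2]; ring
    exact mul_left_cancel₀ hz0 this

lemma witness {n : ℕ} [NeZero n] (hn : 3 ≤ n) (i j : Fin n) (hij : i ≠ j)
    (hg : ¬(Nat.gcd (2 * (j - i).val) n = 1 ∨ Nat.gcd (2 * (j - i).val) n = 2)) :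
    ∃ (μ : ℂ) (v : Fin n → ℂ), (∀ m, v (m + 1) + v (m - 1) = μ * v m) ∧
      v i = 0 ∧ v j = 0 ∧ v ≠ 0 := by
  push_neg at hg
  set d : ℕ := (j - i).val with hddef
  set g : ℕ := Nat.gcd (2 * d) n with hgdef
  have hgn : g ∣ n := Nat.gcd_dvd_right _ _
  have hgd : g ∣ 2 * d := Nat.gcd_dvd_left _ _
  have hnpos : 0 < n := by omega
  have hg0 : g ≠ 0 := by
    intro h
    exact absurd (Nat.eq_zero_of_gcd_eq_zero_right (hgdef ▸ h)) (by omega)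
  have hg3 : 3 ≤ g := by
    rcases hg with ⟨h1, h2⟩; omega
  have hgle : g ≤ n := Nat.le_of_dvd hnpos hgn
  have hdiv1 : 1 ≤ n / g := (Nat.one_le_div_iff (by omega)).mpr hgle
  obtain ⟨ζ, hζ⟩ : ∃ ζ : ℂ, IsPrimitiveRoot ζ n := ⟨_, Complex.isPrimitiveRoot_exp n (by omega)⟩
  set z : ℂ := ζ ^ (n / g) with hzdef
  have hzn : z ^ n = 1 := by
    rw [hzdef, ← pow_mul, mul_comm, pow_mul, hζ.pow_eq_one, one_pow]
  have hz2d : z ^ (2 * d) = 1 := by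
    obtain ⟨c, hc⟩ := hgd
    have e : n / g * (2 * d) = n * c := by
      rw [hc, ← mul_assoc, Nat.div_mul_cancel hgn]
    rw [hzdef, ← pow_mul, e, pow_mul, hζ.pow_eq_one, one_pow]
  have hz2 : z ^ 2 ≠ 1 := by
    intro h1'
    rw [hzdef, ← pow_mul, hζ.pow_eq_one_iff_dvd] at h1'
    have h3 : 3 * (n / g) ≤ n := by
      calc 3 * (n / g) ≤ g * (n / g) := Nat.mul_le_mul_right _ hg3
        _ = (n / g) * g := mul_comm _ _
        _ ≤ n := Nat.div_mul_le_self n g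
    have : n ≤ n / g * 2 := Nat.le_of_dvd (by omega) h1'
    omega
  have hz0 : z ≠ 0 := pow_ne_zero _ (hζ.ne_zero (by omega))
  -- the eigenvector
  set f : Fin n → ℂ := fun a => z ^ a.val with hfdef
  have hf1 : ∀ a : Fin n, f (a + 1) = z * f a := by
    intro a
    show z ^ (a + 1).val = z * z ^ a.val
    rw [fin_val_add_one hn, pow_val_mod hzn, pow_succ, mul_comm]
  have hf2 : ∀ a : Fin n, f (a - 1) = z⁻¹ * f a := by
    intro a
    have := hf1 (a - 1)
    rw [sub_add_cancel] at this
    rw [this, ← mul_assoc, inv_mul_cancel₀ hz0, one_mul]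
  refine ⟨z + z⁻¹, fun m => f (m - i) - f (i - m), ?_, ?_, ?_, ?_⟩
  · intro m
    show f (m + 1 - i) - f (i - (m + 1)) + (f (m - 1 - i) - f (i - (m - 1)))
        = (z + z⁻¹) * (f (m - i) - f (i - m))
    have e1 : m + 1 - i = (m - i) + 1 := by ring
    have e2 : i - (m + 1) = (i - m) - 1 := by ring
    have e3 : m - 1 - i = (m - i) - 1 := by ring
    have e4 : i - (m - 1) = (i - m) + 1 := by ring
    rw [e1, e2, e3, e4, hf1, hf2, hf2, hf1]
    ring
  · simp
  · -- v j = z^d - z^(n-d) = 0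
    have hd0 : (j - i) ≠ 0 := sub_ne_zero.mpr hij.symm
    have hdpos : 0 < d := Nat.pos_of_ne_zero fun h => hd0 (Fin.ext (by rw [Fin.val_zero]; exact h))
    have hdlt : d < n := (j - i).isLt
    have hij' : i - j = -(j - i) := by ring
    have hvj : f (i - j) = z ^ (n - d) := by
      show z ^ (i - j).val = z ^ (n - d)
      rw [hij', Fin.coe_neg, ← hddef, pow_val_mod hzn]
    show f (j - i) - f (i - j) = 0
    rw [hvj]
    show z ^ d - z ^ (n - d) = 0
    have key : z ^ d * z ^ d = z ^ (n - d) * z ^ d := by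
      rw [← pow_add, ← pow_add]
      have e : n - d + d = n := by omega
      rw [e, hzn, ← two_mul, hz2d]
    rw [sub_eq_zero]
    exact mul_right_cancel₀ (pow_ne_zero _ hz0) key
  · -- v (i+1) ≠ 0
    intro hzero
    have hv1 : f (i + 1 - i) - f (i - (i + 1)) = 0 := by
      have := congrFun hzero (i + 1)
      simpa using this
    have e1 : i + 1 - i = 1 := by ring
    have e2 : i - (i + 1) = -1 := by ring
    rw [e1, e2] at hv1
    have hm1 : f (-1 : Fin n) = z ^ (n - 1) := by
      show z ^ ((-1 : Fin n)).val = z ^ (n - 1)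
      rw [Fin.coe_neg, fin_val_one hn, pow_val_mod hzn]
    have h1' : f (1 : Fin n) = z := by
      show z ^ ((1 : Fin n)).val = z
      rw [fin_val_one hn, pow_one]
    rw [hm1, h1', sub_eq_zero] at hv1
    have hfin : z ^ 2 = 1 := by
      calc z ^ 2 = z * z := by rw [pow_two]
        _ = z ^ (n - 1) * z := by rw [congrArg (fun t => t * z) hv1]
        _ = z ^ (n - 1 + 1) := by rw [pow_succ]
        _ = 1 := by rw [show n - 1 + 1 = n by omega, hzn]
    exact hz2 hfin

lemma cycAdj_symm (n : ℕ) : ((cycAdj n).map Complex.ofReal)ᵀ = (cycAdj n).map Complex.ofReal := by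
  ext a b
  simp only [Matrix.transpose_apply, Matrix.map_apply, cycAdj, Matrix.of_apply]
  congr 1
  exact if_congr or_comm rfl rfl

lemma pair_mulVec {n : ℕ} (i j : Fin n) (v : Fin n → ℂ) (c : Fin 2) :
    Matrix.mulVec ((pairMatrix n i j).map Complex.ofReal)ᵀ v c
      = v (if c = 0 then i else j) := by
  unfold Matrix.mulVec dotProduct
  have : ∀ r : Fin n, ((pairMatrix n i j).map Complex.ofReal)ᵀ c r * v r
      = if r = (if c = 0 then i else j) then v r else 0 := by
    intro r
    simp only [Matrix.transpose_apply, Matrix.map_apply, pairMatrix, Matrix.of_apply]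
    by_cases h : r = (if c = 0 then i else j) <;> simp [h]
  simp only [this]
  rw [Finset.sum_ite_eq' Finset.univ (if c = 0 then i else j) v]
  simp

lemma decomp {n : ℕ} [NeZero n] (hn : 3 ≤ n) (i j : Fin n) (μ : ℂ) (v : Fin n → ℂ) :
    Matrix.mulVec (Matrix.fromCols ((cycAdj n).map Complex.ofReal - μ • 1)
      ((pairMatrix n i j).map Complex.ofReal))ᵀ v = 0
    ↔ (∀ m, v (m + 1) + v (m - 1) = μ * v m) ∧ v i = 0 ∧ v j = 0 := by
  rw [Matrix.transpose_fromCols, Matrix.fromRows_mulVec]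
  constructor
  · intro h
    have hA : ∀ m : Fin n, Matrix.mulVec ((cycAdj n).map Complex.ofReal - μ • 1)ᵀ v m = 0 :=
      fun m => congrFun h (Sum.inl m)
    have hB : ∀ c : Fin 2, Matrix.mulVec ((pairMatrix n i j).map Complex.ofReal)ᵀ v c = 0 :=
      fun c => congrFun h (Sum.inr c)
    refine ⟨fun m => ?_, ?_, ?_⟩
    · have := hA m
      rw [Matrix.transpose_sub, Matrix.transpose_smul, Matrix.transpose_one, cycAdj_symm,
        Matrix.sub_mulVec, Matrix.smul_mulVec, Matrix.one_mulVec] at this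
      have h2 : ((cycAdj n).map Complex.ofReal).mulVec v m - μ * v m = 0 := by
        simpa using this
      rw [cyc_mulVec hn v m] at h2
      linear_combination h2
    · have := hB 0
      rwa [pair_mulVec, if_pos rfl] at this
    · have := hB 1
      rw [pair_mulVec] at this
      simpa using this
  · rintro ⟨hv, hvi, hvj⟩
    funext x
    cases x with
    | inl m =>
      show Matrix.mulVec ((cycAdj n).map Complex.ofReal - μ • 1)ᵀ v m = 0
      rw [Matrix.transpose_sub, Matrix.transpose_smul, Matrix.transpose_one, cycAdj_symm,
        Matrix.sub_mulVec, Matrix.smul_mulVec, Matrix.one_mulVec]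
      have h5 := hv m
      simp only [Pi.sub_apply, Pi.smul_apply, smul_eq_mul]
      rw [cyc_mulVec hn v m]
      linear_combination h5
    | inr c =>
      show Matrix.mulVec ((pairMatrix n i j).map Complex.ofReal)ᵀ v c = 0
      rw [pair_mulVec]
      by_cases h : c = 0 <;> simp [h, hvi, hvj]

lemma gcd_flip {n x : ℕ} (hx : x ≤ n) : Nat.gcd (2 * (n - x)) n = Nat.gcd (2 * x) n := by
  have h : ∀ k, k ∣ n → (k ∣ 2 * (n - x) ↔ k ∣ 2 * x) := by
    intro k hk
    have h2n : k ∣ 2 * n := Dvd.dvd.mul_left hk 2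
    have e1 : 2 * n - 2 * (n - x) = 2 * x := by omega
    have e2 : 2 * n - 2 * x = 2 * (n - x) := by omega
    constructor
    · intro h'
      have := Nat.dvd_sub h2n h'
      rwa [e1] at this
    · intro h'
      have := Nat.dvd_sub h2n h'
      rwa [e2] at this
  apply Nat.dvd_antisymm
  · exact Nat.dvd_gcd ((h _ (Nat.gcd_dvd_right _ _)).mp (Nat.gcd_dvd_left _ _))
      (Nat.gcd_dvd_right _ _)
  · exact Nat.dvd_gcd ((h _ (Nat.gcd_dvd_right _ _)).mpr (Nat.gcd_dvd_left _ _))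
      (Nat.gcd_dvd_right _ _)

lemma gcd_dist {n : ℕ} [NeZero n] (hn : 3 ≤ n) (i j : Fin n) (hij : i ≠ j) :
    Nat.gcd (2 * (j - i).val) n
      = Nat.gcd (2 * min (max i.1 j.1 - min i.1 j.1) (n - (max i.1 j.1 - min i.1 j.1))) n := by
  set D : ℕ := max i.1 j.1 - min i.1 j.1 with hD
  have hi := i.isLt
  have hj := j.isLt
  have hijv : i.1 ≠ j.1 := fun h => hij (Fin.ext h)
  have hDlt : D < n := by omega
  have hval : (j - i).val = (j.1 + (n - i.1)) % n := by
    rw [Fin.sub_def]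
    show (n - i.1 + j.1) % n = _
    ring_nf
  have hcase : (j - i).val = D ∨ (j - i).val = n - D := by
    rcases Nat.lt_or_ge i.1 j.1 with h | h
    · left
      rw [hval]
      have e : j.1 + (n - i.1) = n + (j.1 - i.1) := by omega
      rw [e, Nat.add_mod_left, Nat.mod_eq_of_lt (by omega)]
      omega
    · right
      rw [hval]
      have e : j.1 + (n - i.1) = n - (i.1 - j.1) := by omega
      rw [e, Nat.mod_eq_of_lt (by omega)]
      omega
  have hflipD : Nat.gcd (2 * (n - D)) n = Nat.gcd (2 * D) n := gcd_flip (by omega)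
  have hmin : min D (n - D) = D ∨ min D (n - D) = n - D := by omega
  rcases hcase with h | h <;> rcases hmin with h2 | h2 <;> rw [h, h2]
  · rw [hflipD]
  · rw [hflipD]

/-- `{i,j}` is a driver set for `C_n` iff `gcd(2d, n) ∈ {1,2}`, where `d` is the
cycle distance between `i` and `j`. -/
theorem stmt11 (n : ℕ) (hn : 3 ≤ n) (i j : Fin n) (hij : i ≠ j) :
    (∀ μ : ℂ,
      (Matrix.fromCols ((cycAdj n).map Complex.ofReal - μ • 1)
        ((pairMatrix n i j).map Complex.ofReal)).rank = n)
    ↔ (Nat.gcd (2 * min (max i.1 j.1 - min i.1 j.1) (n - (max i.1 j.1 - min i.1 j.1))) n = 1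
       ∨ Nat.gcd (2 * min (max i.1 j.1 - min i.1 j.1) (n - (max i.1 j.1 - min i.1 j.1))) n = 2) := by
  haveI : NeZero n := ⟨by omega⟩
  rw [← gcd_dist hn i j hij]
  constructor
  · intro hrank
    by_contra hg
    obtain ⟨μ, v, hv, hvi, hvj, hvne⟩ := witness hn i j hij hg
    exact hvne ((rank_full_iff _).mp (hrank μ) v ((decomp hn i j μ v).mpr ⟨hv, hvi, hvj⟩))
  · intro hg μ
    rw [rank_full_iff]
    intro v hv0
    obtain ⟨hv, hvi, hvj⟩ := (decomp hn i j μ v).mp hv0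
    by_cases h1 : v (i + 1) = 0
    · funext a
      rw [eigen_vanish hn i hv hvi a, h1, zero_mul]
      simp
    · exfalso
      have hd1 : 0 < (j - i).val := by
        have hd0 : (j - i) ≠ 0 := sub_ne_zero.mpr hij.symm
        exact Nat.pos_of_ne_zero fun h => hd0 (Fin.ext (by rw [Fin.val_zero]; exact h))
      have h0 : cheb μ n = 0 := by
        have hf := v_formula hn i hv hvi n
        rw [Fin.natCast_self, add_zero, hvi] at hf
        rcases mul_eq_zero.mp hf.symm with h | h
        · exact absurd h h1
        · exact h
      have h2 : cheb μ ((j - i).val) = 0 := by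
        have hf := eigen_vanish hn i hv hvi j
        rw [hvj] at hf
        rcases mul_eq_zero.mp hf.symm with h | h
        · exact absurd h h1
        · exact h
      have h3 : cheb μ (n + 1) = 1 := by
        have hf := v_formula hn i hv hvi (n + 1)
        have e : ((n + 1 : ℕ) : Fin n) = 1 := by
          push_cast
          rw [Fin.natCast_self, zero_add]
        rw [e] at hf
        have := mul_left_cancel₀ h1 (by rw [← hf, mul_one] : v (i + 1) * cheb μ (n + 1) = v (i + 1) * 1)
        exact this
      exact cheb_gcd hn hd1 h0 h3 h2 hg
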